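/- Suppose sprank(A^S) = n. Let the random matrix A be defined by drawing each entry A_{ij} with (i,j) ∈ S independently from a Borel probability distribution on ℝ having no atoms (a continuous distribution), and setting A_{ij} = 0 for (i,j) ∉ S. Then with probability one, cospark(A) = spcospark(A^S). -/

import Mathlib

open Matrix MeasureTheory

/-- `A` has sparsity pattern `S`: the nonzero entries of `A` are exactly those indexed by `S`. -/
def HasPattern {m n : ℕ} (S : Finset (Fin m × Fin n)) (A : Matrix (Fin m) (Fin n) ℝ) : Prop :=
  ∀ i j, A i j ≠ 0 ↔ (i, j) ∈ S

/-- Generic rank of the class of matrices with sparsity pattern `S`. -/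
noncomputable def sprank {m n : ℕ} (S : Finset (Fin m × Fin n)) : ℕ :=
  sSup {r : ℕ | ∃ A : Matrix (Fin m) (Fin n) ℝ, HasPattern S A ∧ A.rank = r}

/-- The sparsity pattern restricted to the rows in `T` (rows outside `T` become zero). -/
def patternOn {m n : ℕ} (S : Finset (Fin m × Fin n)) (T : Finset (Fin m)) :
    Finset (Fin m × Fin n) :=
  S.filter (fun p => p.1 ∈ T)

/-- A matching of a sparsity pattern: any two distinct pairs differ in both coordinates. -/
def IsMatching {m n : ℕ} (M : Finset (Fin m × Fin n)) : Prop :=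
  ∀ p ∈ M, ∀ q ∈ M, p ≠ q → p.1 ≠ q.1 ∧ p.2 ≠ q.2

/-- `nu S` : maximum cardinality of a matching contained in `S`. -/
noncomputable def nu {m n : ℕ} (S : Finset (Fin m × Fin n)) : ℕ :=
  sSup {k : ℕ | ∃ M ⊆ S, IsMatching M ∧ M.card = k}

/-- ℓ₀ "norm": number of nonzero entries of a vector. -/
noncomputable def l0 {m : ℕ} (y : Fin m → ℝ) : ℕ :=
  (Finset.univ.filter (fun i => y i ≠ 0)).card

/-- `cospark A` : minimum of `‖A x‖₀` over nonzero `x`. -/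
noncomputable def cospark {m n : ℕ} (A : Matrix (Fin m) (Fin n) ℝ) : ℕ :=
  sInf {k : ℕ | ∃ x : Fin n → ℝ, x ≠ 0 ∧ l0 (A.mulVec x) = k}

/-- Generic cospark of the class of matrices with sparsity pattern `S`. -/
noncomputable def spcospark {m n : ℕ} (S : Finset (Fin m × Fin n)) : ℕ :=
  sSup {k : ℕ | ∃ A : Matrix (Fin m) (Fin n) ℝ, HasPattern S A ∧ cospark A = k}

/-- The row-submatrix `A_T`, realized as `A` with the rows outside `T` zeroed out. -/
noncomputable def rowRestrict {m n : ℕ} (A : Matrix (Fin m) (Fin n) ℝ) (T : Finset (Fin m)) :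
    Matrix (Fin m) (Fin n) ℝ :=
  Matrix.of fun i j => if i ∈ T then A i j else 0

/-- `X_W` : the rows of the pattern `S` all of whose nonzero positions lie in the columns `W`. -/
def rowsIn {m n : ℕ} (S : Finset (Fin m × Fin n)) (W : Finset (Fin n)) : Finset (Fin m) :=
  Finset.univ.filter (fun i => ∀ j, (i, j) ∈ S → j ∈ W)


lemma slice_null {ι X : Type*} [Fintype ι] [DecidableEq ι] [MeasurableSpace X]
    (μ : ι → Measure X) [∀ i, IsProbabilityMeasure (μ i)] (i₀ : ι)
    {C : Set (ι → X)} (hC : MeasurableSet C)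
    (h : ∀ x : ι → X, μ i₀ {t | Function.update x i₀ t ∈ C} = 0) :
    Measure.pi μ C = 0 := by
  rcases isEmpty_or_nonempty X with hX | hX
  · have : IsEmpty (ι → X) := ⟨fun f => (hX.false (f i₀))⟩
    rw [Set.eq_empty_of_isEmpty C]; simp
  classical
  set p : ι → Prop := fun i => i ≠ i₀ with hp
  haveI : DecidablePred p := fun i => instDecidableNot
  letI : Unique {i // ¬ p i} :=
    ⟨⟨⟨i₀, by simp [hp]⟩⟩, fun j => Subtype.ext (not_not.mp j.2)⟩
  have hdef : ((default : {i // ¬ p i}) : ι) = i₀ := rfl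
  set e := MeasurableEquiv.piEquivPiSubtypeProd (fun _ : ι => X) p with he
  have mp := measurePreserving_piEquivPiSubtypeProd μ p
  have key : Measure.pi μ C
      = ((Measure.pi fun i : Subtype p => μ i).prod (Measure.pi fun i : {i // ¬ p i} => μ i))
        (e.symm ⁻¹' C) := by
    have := (mp.symm e).measure_preimage (s := C) hC.nullMeasurableSet
    exact this.symm
  rw [key]
  rw [Measure.measure_prod_null (e.symm.measurable hC)]
  refine Filter.Eventually.of_forall (fun r => ?_)
  -- the section over r
  obtain ⟨v₀⟩ := hX
  set x : ι → X := fun i => if hi : p i then r ⟨i, hi⟩ else v₀ with hx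
  have hxe : ∀ t : X, e.symm (r, fun _ => t) = Function.update x i₀ t := by
    intro t
    funext i
    show (MeasurableEquiv.piEquivPiSubtypeProd (fun _ : ι => X) p).symm (r, fun _ => t) i = _
    rw [MeasurableEquiv.piEquivPiSubtypeProd]
    show (Equiv.piEquivPiSubtypeProd p (fun _ : ι => X)).symm (r, fun _ => t) i = _
    rw [Equiv.piEquivPiSubtypeProd_symm_apply]
    by_cases hi : p i
    · rw [dif_pos hi, Function.update_of_ne hi]; simp only [hx]; rw [dif_pos hi]
    · rw [dif_neg hi]
      have : i = i₀ := not_not.mp hi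
      subst this
      rw [Function.update_self]
  set T : Set X := {t | Function.update x i₀ t ∈ C} with hT
  have hTm : MeasurableSet T := (measurable_update x) hC
  have hsub : (Prod.mk r ⁻¹' (e.symm ⁻¹' C))
      ⊆ (MeasurableEquiv.piUnique (fun _ : {i // ¬ p i} => X)) ⁻¹' T := by
    intro v hv
    have hveq : v = fun _ => v default := by
      funext j; rw [Unique.eq_default j]
    show (v default) ∈ T
    rw [hT, Set.mem_setOf_eq, ← hxe]
    rw [Set.mem_preimage, Set.mem_preimage] at hv
    rwa [← hveq]
  refine le_antisymm ?_ (zero_le)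
  calc (Measure.pi fun i : {i // ¬ p i} => μ i) (Prod.mk r ⁻¹' (e.symm ⁻¹' C))
      ≤ (Measure.pi fun i : {i // ¬ p i} => μ i)
        ((MeasurableEquiv.piUnique (fun _ : {i // ¬ p i} => X)) ⁻¹' T) := measure_mono hsub
    _ = (μ i₀) T := by
        have := (measurePreserving_piUnique (fun i : {i // ¬ p i} => μ i)).measure_preimage
          (s := T) hTm.nullMeasurableSet
        rw [this, hdef]
    _ = 0 := h x


variable {m n : ℕ}

/-- update one entry of a nested matrix-like function -/
noncomputable def upd (ω : Fin m → Fin n → ℝ) (p : Fin m × Fin n) (t : ℝ) :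
    Fin m → Fin n → ℝ :=
  Function.update ω p.1 (Function.update (ω p.1) p.2 t)

lemma upd_apply (ω : Fin m → Fin n → ℝ) (p : Fin m × Fin n) (t : ℝ) (i : Fin m) (j : Fin n) :
    upd ω p t i j = if i = p.1 ∧ j = p.2 then t else ω i j := by
  unfold upd
  rcases eq_or_ne i p.1 with h1 | h1
  · subst h1
    rw [Function.update_self]
    rcases eq_or_ne j p.2 with h2 | h2
    · subst h2; simp
    · rw [Function.update_of_ne h2]; simp [h2]
  · rw [Function.update_of_ne h1]; simp [h1]

lemma upd_self (ω : Fin m → Fin n → ℝ) (p : Fin m × Fin n) :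
    upd ω p (ω p.1 p.2) = ω := by
  funext i j; rw [upd_apply]
  split_ifs with h
  · rw [h.1, h.2]
  · rfl

lemma upd_upd_same (ω : Fin m → Fin n → ℝ) (p : Fin m × Fin n) (t s : ℝ) :
    upd (upd ω p t) p s = upd ω p s := by
  funext i j; rw [upd_apply, upd_apply, upd_apply]
  split_ifs with h <;> rfl

lemma upd_comm (ω : Fin m → Fin n → ℝ) {p q : Fin m × Fin n} (hpq : p ≠ q) (t s : ℝ) :
    upd (upd ω p t) q s = upd (upd ω q s) p t := by
  funext i j
  simp only [upd_apply]
  split_ifs with h1 h2 <;> try rfl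
  exact absurd (Prod.ext (h2.1.symm.trans h1.1) (h2.2.symm.trans h1.2)) hpq

lemma upd_measurable (p : Fin m × Fin n) (t : ℝ) :
    Measurable (fun ω : Fin m → Fin n → ℝ => upd ω p t) := by
  unfold upd
  apply measurable_pi_iff.mpr
  intro i
  rcases eq_or_ne i p.1 with h | h
  · subst h
    simp only [Function.update_self]
    have h1 : Measurable fun ω : Fin m → Fin n → ℝ => ω p.1 := measurable_pi_apply p.1
    have h2 : Measurable fun v : Fin n → ℝ => Function.update v p.2 t := by
      have := measurable_update (f := fun _ : Fin n => (0:ℝ)) (a := p.2)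
      exact measurable_pi_iff.mpr fun j => by
        rcases eq_or_ne j p.2 with hj | hj
        · subst hj; simp only [Function.update_self]; exact measurable_const
        · simp only [Function.update_of_ne hj]; exact measurable_pi_apply j
    exact h2.comp h1
  · simp only [Function.update_of_ne h]
    exact measurable_pi_apply _

lemma upd_eval (ω : Fin m → Fin n → ℝ) (p : Fin m × Fin n) (t : ℝ) :
    upd ω p t p.1 p.2 = t := by rw [upd_apply]; simp

lemma upd_eval_ne (ω : Fin m → Fin n → ℝ) {p q : Fin m × Fin n} (h : q ≠ p) (t : ℝ) :
    upd ω p t q.1 q.2 = ω q.1 q.2 := by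
  rw [upd_apply]
  split_ifs with hc
  · exact absurd (Prod.ext hc.1 hc.2) h
  · rfl

/-- the nested slice lemma -/
lemma slice_null2 (μ : Fin m → Fin n → Measure ℝ) [∀ i j, IsProbabilityMeasure (μ i j)]
    (p : Fin m × Fin n) {C : Set (Fin m → Fin n → ℝ)} (hC : MeasurableSet C)
    (h : ∀ ω, μ p.1 p.2 {t | upd ω p t ∈ C} = 0) :
    (Measure.pi fun i => Measure.pi fun j => μ i j) C = 0 := by
  apply slice_null (fun i => Measure.pi fun j => μ i j) p.1 hC
  intro ω
  have hD : MeasurableSet {v : Fin n → ℝ | Function.update ω p.1 v ∈ C} :=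
    (measurable_update ω) hC
  apply slice_null (μ p.1) p.2 hD
  intro v
  have : {t | Function.update v p.2 t ∈ {v | Function.update ω p.1 v ∈ C}}
      = {t | upd (Function.update ω p.1 v) p t ∈ C} := by
    ext t
    simp only [Set.mem_setOf_eq]
    unfold upd
    rw [Function.update_self, Function.update_idem]
  rw [this]
  exact h _


lemma const_of_indep (f : (Fin m → Fin n → ℝ) → ℝ)
    (h : ∀ p ω t, f (upd ω p t) = f ω) (ω ω' : Fin m → Fin n → ℝ) : f ω = f ω' := by
  suffices haux : ∀ s : Finset (Fin m × Fin n), ∀ ω ω' : Fin m → Fin n → ℝ,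
      (∀ p : Fin m × Fin n, p ∉ s → ω p.1 p.2 = ω' p.1 p.2) → f ω = f ω' by
    exact haux Finset.univ ω ω' (fun p hp => absurd (Finset.mem_univ p) hp)
  intro s
  induction s using Finset.induction_on with
  | empty =>
    intro ω ω' hagree
    have : ω = ω' := funext fun i => funext fun j =>
      hagree (i, j) (Finset.notMem_empty _)
    rw [this]
  | insert p s hps ih =>
    intro ω ω' hagree
    set ω'' := upd ω' p (ω p.1 p.2) with hω''
    have h1 : f ω'' = f ω' := h p ω' _
    have h2 : f ω = f ω'' := by
      apply ih
      intro q hq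
      rcases eq_or_ne q p with rfl | hqp
      · rw [hω'', upd_eval]
      · rw [hω'', upd_eval_ne _ hqp]
        exact hagree q (by simp [hq, hqp])
    rw [h2, h1]

lemma core (μ : Fin m → Fin n → Measure ℝ) [∀ i j, IsProbabilityMeasure (μ i j)]
    (T : Finset (Fin m × Fin n)) :
    ∀ (_ : ∀ p ∈ T, ∀ c : ℝ, μ p.1 p.2 {c} = 0)
      (κ : Type) (_ : Countable κ) (f : κ → (Fin m → Fin n → ℝ) → ℝ)
      (_ : ∀ k, Measurable (f k))
      (_ : ∀ (k : κ) (p : Fin m × Fin n) (ω : Fin m → Fin n → ℝ),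
        ∃ q : Polynomial ℝ, ∀ t, f k (upd ω p t) = q.eval t)
      (_ : ∀ (k : κ) (p : Fin m × Fin n), p ∉ T → ∀ ω t, f k (upd ω p t) = f k ω)
      (_ : ∃ k ω₀, f k ω₀ ≠ 0),
    (Measure.pi fun i => Measure.pi fun j => μ i j) {ω | ∀ k, f k ω = 0} = 0 := by
  induction T using Finset.induction_on with
  | empty =>
    intro _ κ hκ f hmeas hpoly hind hwit
    obtain ⟨k₀, ω₀, hω₀⟩ := hwit
    have : {ω : Fin m → Fin n → ℝ | ∀ k, f k ω = 0} = ∅ := by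
      apply Set.eq_empty_iff_forall_notMem.mpr
      intro ω hω
      have := const_of_indep (f k₀)
        (fun p ω t => hind k₀ p (Finset.notMem_empty p) ω t) ω₀ ω
      exact hω₀ (this.trans (hω k₀))
    rw [this, measure_empty]
  | insert p₀ s hps ih =>
    intro hat κ hκ f hmeas hpoly hind hwit
    haveI : Countable κ := hκ
    haveI : NullSingletonClass (μ p₀.1 p₀.2) := ⟨hat p₀ (Finset.mem_insert_self _ _)⟩
    set A : Set (Fin m → Fin n → ℝ) := ⋂ k, f k ⁻¹' {0} with hA
    set g : κ × ℚ → (Fin m → Fin n → ℝ) → ℝ :=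
      fun kq ω => f kq.1 (upd ω p₀ (kq.2 : ℝ)) with hg
    have hgmeas : ∀ kq, Measurable (g kq) := by
      intro kq
      have : Measurable (fun ω : Fin m → Fin n → ℝ => upd ω p₀ (kq.2 : ℝ)) :=
        upd_measurable p₀ _
      exact (hmeas kq.1).comp this
    set B : Set (Fin m → Fin n → ℝ) := ⋂ kq, g kq ⁻¹' {0} with hB
    have hAmeas : MeasurableSet A :=
      MeasurableSet.iInter fun k => (hmeas k) (measurableSet_singleton 0)
    have hBmeas : MeasurableSet B :=
      MeasurableSet.iInter fun kq => (hgmeas kq) (measurableSet_singleton 0)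
    have hsetA : {ω : Fin m → Fin n → ℝ | ∀ k, f k ω = 0} = A := by
      ext ω; simp [hA]
    rw [hsetA]
    have hAB : A ⊆ (A \ B) ∪ B := fun ω hω => by
      by_cases hb : ω ∈ B
      · exact Or.inr hb
      · exact Or.inl ⟨hω, hb⟩
    refine le_antisymm ?_ (zero_le)
    calc (Measure.pi fun i => Measure.pi fun j => μ i j) A
        ≤ (Measure.pi fun i => Measure.pi fun j => μ i j) ((A \ B) ∪ B) := measure_mono hAB
      _ ≤ (Measure.pi fun i => Measure.pi fun j => μ i j) (A \ B)
          + (Measure.pi fun i => Measure.pi fun j => μ i j) B := measure_union_le _ _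
      _ = 0 := by
          have hABnull : (Measure.pi fun i => Measure.pi fun j => μ i j) (A \ B) = 0 := by
            apply slice_null2 μ p₀ (hAmeas.diff hBmeas)
            intro ω
            by_cases hne : ∃ t₀, upd ω p₀ t₀ ∈ A \ B
            · obtain ⟨t₀, hA₀, hB₀⟩ := hne
              rw [hB, Set.mem_iInter] at hB₀
              push_neg at hB₀
              obtain ⟨⟨k, q⟩, hq⟩ := hB₀
              rw [Set.mem_preimage, Set.mem_singleton_iff, hg] at hq
              simp only at hq
              rw [upd_upd_same] at hq
              obtain ⟨P, hP⟩ := hpoly k p₀ ω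
              have hPne : P ≠ 0 := by
                intro hP0
                apply hq
                rw [hP (q : ℝ), hP0, Polynomial.eval_zero]
              refine measure_mono_null ?_ (Set.Finite.measure_zero
                (Polynomial.finite_setOf_isRoot hPne) _)
              intro t ht
              have htA : upd ω p₀ t ∈ A := ht.1
              rw [hA, Set.mem_iInter] at htA
              have h2 := htA k
              rw [Set.mem_preimage, Set.mem_singleton_iff] at h2
              show P.eval t = 0
              rw [← hP t]; exact h2
            · push_neg at hne
              have : {t | upd ω p₀ t ∈ A \ B} = ∅ :=
                Set.eq_empty_iff_forall_notMem.mpr hne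
              rw [this, measure_empty]
          have hBnull : (Measure.pi fun i => Measure.pi fun j => μ i j) B = 0 := by
            have := ih (fun p hp => hat p (Finset.mem_insert_of_mem hp)) (κ × ℚ)
              inferInstance g hgmeas ?_ ?_ ?_
            · rw [← this]
              congr 1
              ext ω
              simp [hB, hg]
            · -- poly
              rintro ⟨k, q⟩ p ω
              by_cases hp : p = p₀
              · subst hp
                refine ⟨Polynomial.C (f k (upd ω p (q : ℝ))), fun t => ?_⟩
                rw [hg]
                simp only
                rw [upd_upd_same, Polynomial.eval_C]
              · obtain ⟨P, hP⟩ := hpoly k p (upd ω p₀ (q : ℝ))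
                refine ⟨P, fun t => ?_⟩
                rw [hg]
                simp only
                rw [upd_comm _ hp, hP]
            · -- independence
              rintro ⟨k, q⟩ p hp ω t
              by_cases hpp : p = p₀
              · subst hpp
                rw [hg]; simp only
                rw [upd_upd_same]
              · rw [hg]; simp only
                rw [upd_comm _ hpp]
                exact hind k p (by simp [hp, hpp]) _ t
            · -- witness
              obtain ⟨k, ω₀, hk⟩ := hwit
              obtain ⟨P, hP⟩ := hpoly k p₀ ω₀
              have hPne : P ≠ 0 := by
                intro h0
                apply hk
                have := hP (ω₀ p₀.1 p₀.2)
                rw [upd_self] at this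
                rw [this, h0, Polynomial.eval_zero]
              have : ∃ q : ℚ, ¬ P.IsRoot (q : ℝ) := by
                by_contra hq
                push_neg at hq
                have hsub : Set.range (fun q : ℚ => (q : ℝ)) ⊆ {x | P.IsRoot x} := by
                  rintro x ⟨q, rfl⟩; exact hq q
                exact Set.infinite_range_of_injective Rat.cast_injective
                  ((Polynomial.finite_setOf_isRoot hPne).subset hsub)
              obtain ⟨q, hqr⟩ := this
              exact ⟨(k, q), ω₀, by rw [hg]; simpa [hP (q:ℝ)] using hqr⟩
          rw [hABnull, hBnull, add_zero]



/-- kernel characterization of rank deficiency -/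
lemma rank_lt_iff_exists_kernel {m n : ℕ} (A : Matrix (Fin m) (Fin n) ℝ) :
    A.rank < n ↔ ∃ x : Fin n → ℝ, x ≠ 0 ∧ A.mulVec x = 0 := by
  have hrn := LinearMap.finrank_range_add_finrank_ker A.mulVecLin
  rw [Module.finrank_fintype_fun_eq_card, Fintype.card_fin] at hrn
  have hrank : A.rank = Module.finrank ℝ (LinearMap.range A.mulVecLin) := rfl
  constructor
  · intro h
    have hker : Module.finrank ℝ (LinearMap.ker A.mulVecLin) ≠ 0 := by omega
    have : LinearMap.ker A.mulVecLin ≠ ⊥ := by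
      intro hbot
      apply hker
      rw [hbot]
      exact finrank_bot ℝ _
    obtain ⟨x, hx, hx0⟩ := (Submodule.ne_bot_iff _).mp this
    exact ⟨x, hx0, by rw [← A.mulVecLin_apply]; exact hx⟩
  · rintro ⟨x, hx0, hx⟩
    have : LinearMap.ker A.mulVecLin ≠ ⊥ := by
      apply (Submodule.ne_bot_iff _).mpr
      exact ⟨x, by rw [LinearMap.mem_ker, A.mulVecLin_apply]; exact hx, hx0⟩
    have hker : Module.finrank ℝ (LinearMap.ker A.mulVecLin) ≠ 0 := by
      intro h0
      exact this (Submodule.finrank_eq_zero.mp h0)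
    omega

/-- a nonzero minor bounds the rank from below -/
lemma rank_ge_of_minor {m n r : ℕ} (A : Matrix (Fin m) (Fin n) ℝ)
    (R : Fin r → Fin m) (C : Fin r → Fin n)
    (h : (A.submatrix R C).det ≠ 0) : r ≤ A.rank := by
  classical
  set P : Matrix (Fin r) (Fin m) ℝ := Matrix.of fun a i => if R a = i then 1 else 0 with hP
  set Q : Matrix (Fin n) (Fin r) ℝ := Matrix.of fun j b => if C b = j then 1 else 0 with hQ
  have key : P * (A * Q) = A.submatrix R C := by
    ext a b
    rw [Matrix.mul_apply]
    have : ∀ i : Fin m, P a i * (A * Q) i b = if R a = i then (A * Q) i b else 0 := by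
      intro i
      rw [hP]
      by_cases hi : R a = i <;> simp [hi]
    rw [Finset.sum_congr rfl (fun i _ => this i), Finset.sum_ite_eq (Finset.univ) (R a),
      if_pos (Finset.mem_univ _)]
    rw [Matrix.mul_apply]
    have : ∀ j : Fin n, A (R a) j * Q j b = if C b = j then A (R a) j else 0 := by
      intro j
      rw [hQ]
      by_cases hj : C b = j <;> simp [hj]
    rw [Finset.sum_congr rfl (fun j _ => this j), Finset.sum_ite_eq (Finset.univ) (C b),
      if_pos (Finset.mem_univ _)]
    rfl
  have h1 : (A.submatrix R C).rank = r := by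
    rw [Matrix.rank_of_isUnit, Fintype.card_fin]
    exact (Matrix.isUnit_iff_isUnit_det _).mpr (isUnit_iff_ne_zero.mpr h)
  calc r = (A.submatrix R C).rank := h1.symm
    _ = (P * (A * Q)).rank := by rw [key]
    _ ≤ (A * Q).rank := Matrix.rank_mul_le_right _ _
    _ ≤ A.rank := Matrix.rank_mul_le_left _ _

/-- rank many linearly independent rows can be selected -/
lemma exists_indep_rows {m n r : ℕ} (A : Matrix (Fin m) (Fin n) ℝ) (hr : A.rank = r) :
    ∃ R : Fin r → Fin m, LinearIndependent ℝ (fun a => A (R a)) := by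
  classical
  have hspan : A.rank = Module.finrank ℝ (Submodule.span ℝ (Set.range A)) :=
    A.rank_eq_finrank_span_row
  obtain ⟨b, hbsub, hbspan, hbind⟩ := exists_linearIndependent ℝ (Set.range A)
  have hbfin : b.Finite := ((Set.finite_range A).subset hbsub)
  haveI : Fintype b := hbfin.fintype
  have hcard : b.toFinset.card = r := by
    have := finrank_span_set_eq_card hbind
    rw [hbspan, ← hspan, hr] at this
    omega
  have hcard2 : Fintype.card b = r := by
    rwa [Set.toFinset_card] at hcard
  let e : Fin r ≃ b := (Fintype.equivFinOfCardEq hcard2).symm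
  have hsel : ∀ a : Fin r, ∃ i : Fin m, A i = (e a : Fin n → ℝ) := by
    intro a
    obtain ⟨i, hi⟩ := hbsub (e a).2
    exact ⟨i, hi⟩
  choose R hR using hsel
  refine ⟨R, ?_⟩
  have : (fun a => A (R a)) = (fun x : b => (x : Fin n → ℝ)) ∘ e := by
    funext a; rw [hR a]; rfl
  rw [this]
  exact hbind.comp e (e.injective)

/-- a matrix of rank `r` has a nonzero `r × r` minor -/
lemma exists_nonzero_minor {m n r : ℕ} (A : Matrix (Fin m) (Fin n) ℝ) (hr : A.rank = r) :
    ∃ (R : Fin r → Fin m) (C : Fin r → Fin n), (A.submatrix R C).det ≠ 0 := by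
  classical
  obtain ⟨R, hRind⟩ := exists_indep_rows A hr
  set B : Matrix (Fin r) (Fin n) ℝ := A.submatrix R id with hBdef
  have hBind : LinearIndependent ℝ B := hRind
  have hBrank : B.rank = r := by
    have := hBind.rank_matrix; rw [Fintype.card_fin] at this; exact this
  have hBt : Bᵀ.rank = r := by rw [Matrix.rank_transpose]; exact hBrank
  obtain ⟨C, hCind⟩ := exists_indep_rows Bᵀ hBt
  set D : Matrix (Fin r) (Fin r) ℝ := Bᵀ.submatrix C id with hDdef
  have hDind : LinearIndependent ℝ D := hCind
  have hDrank : D.rank = r := by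
    have := hDind.rank_matrix; rw [Fintype.card_fin] at this; exact this
  have hDdet : D.det ≠ 0 := by
    intro h0
    obtain ⟨v, hv0, hv⟩ := Matrix.exists_mulVec_eq_zero_iff.mpr h0
    have : D.rank < r := (rank_lt_iff_exists_kernel D).mpr ⟨v, hv0, hv⟩
    omega
  refine ⟨R, C, ?_⟩
  have hDt : D = (A.submatrix R C)ᵀ := by
    ext c a
    rfl
  rw [← Matrix.det_transpose]
  rw [hDt] at hDdet
  exact hDdet


section Combinatorial
variable {m n : ℕ}

/-- the indicator matrix of a pattern -/
lemma hasPattern_indicator (P : Finset (Fin m × Fin n)) :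
    HasPattern P (Matrix.of fun i j => if (i, j) ∈ P then (1:ℝ) else 0) := by
  intro i j
  by_cases h : (i, j) ∈ P <;> simp [h]

lemma sprank_set_nonempty (P : Finset (Fin m × Fin n)) :
    {r : ℕ | ∃ A : Matrix (Fin m) (Fin n) ℝ, HasPattern P A ∧ A.rank = r}.Nonempty :=
  ⟨_, _, hasPattern_indicator P, rfl⟩

lemma sprank_set_bdd (P : Finset (Fin m × Fin n)) :
    BddAbove {r : ℕ | ∃ A : Matrix (Fin m) (Fin n) ℝ, HasPattern P A ∧ A.rank = r} := by
  refine ⟨n, fun r hr => ?_⟩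
  obtain ⟨A, _, rfl⟩ := hr
  exact A.rank_le_width

lemma rank_le_sprank {P : Finset (Fin m × Fin n)} {A : Matrix (Fin m) (Fin n) ℝ}
    (h : HasPattern P A) : A.rank ≤ sprank P :=
  le_csSup (sprank_set_bdd P) ⟨A, h, rfl⟩

lemma sprank_attained (P : Finset (Fin m × Fin n)) :
    ∃ A : Matrix (Fin m) (Fin n) ℝ, HasPattern P A ∧ A.rank = sprank P := by
  have := Nat.sSup_mem (sprank_set_nonempty P) (sprank_set_bdd P)
  obtain ⟨A, hA, hr⟩ := this
  exact ⟨A, hA, hr⟩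

lemma cospark_set_nonempty (hn : 1 ≤ n) (A : Matrix (Fin m) (Fin n) ℝ) :
    {k : ℕ | ∃ x : Fin n → ℝ, x ≠ 0 ∧ l0 (A.mulVec x) = k}.Nonempty := by
  refine ⟨_, (fun _ => 1), ?_, rfl⟩
  intro h0
  have := congrFun h0 ⟨0, hn⟩
  simp at this

lemma cospark_le_l0 {A : Matrix (Fin m) (Fin n) ℝ} {x : Fin n → ℝ} (hx : x ≠ 0) :
    cospark A ≤ l0 (A.mulVec x) :=
  Nat.sInf_le ⟨x, hx, rfl⟩

lemma cospark_attained (hn : 1 ≤ n) (A : Matrix (Fin m) (Fin n) ℝ) :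
    ∃ x : Fin n → ℝ, x ≠ 0 ∧ l0 (A.mulVec x) = cospark A :=
  Nat.sInf_mem (cospark_set_nonempty hn A)

lemma l0_le (y : Fin m → ℝ) : l0 y ≤ m := by
  unfold l0
  calc (Finset.univ.filter (fun i => y i ≠ 0)).card ≤ Finset.univ.card :=
        Finset.card_le_card (Finset.filter_subset _ _)
    _ = m := by simp

lemma cospark_le (hn : 1 ≤ n) (A : Matrix (Fin m) (Fin n) ℝ) : cospark A ≤ m := by
  obtain ⟨x, hx, hl⟩ := cospark_attained hn A
  rw [← hl]
  exact l0_le _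

lemma rowRestrict_mulVec (A : Matrix (Fin m) (Fin n) ℝ) (T : Finset (Fin m))
    (x : Fin n → ℝ) (i : Fin m) :
    (rowRestrict A T).mulVec x i = if i ∈ T then A.mulVec x i else 0 := by
  unfold rowRestrict Matrix.mulVec dotProduct
  by_cases h : i ∈ T <;> simp [h]

lemma rowRestrict_hasPattern {S : Finset (Fin m × Fin n)} {A : Matrix (Fin m) (Fin n) ℝ}
    (h : HasPattern S A) (T : Finset (Fin m)) :
    HasPattern (patternOn S T) (rowRestrict A T) := by
  intro i j
  unfold rowRestrict patternOn
  rw [Finset.mem_filter]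
  by_cases hT : i ∈ T
  · simp only [Matrix.of_apply, if_pos hT]
    rw [h i j]
    simp [hT]
  · simp [hT]

/-- The deterministic core: if the matrix has the right pattern and all its row-restrictions
achieve the generic rank, then its cospark is the generic cospark. -/
lemma cospark_eq_spcospark_of_generic {S : Finset (Fin m × Fin n)}
    {A : Matrix (Fin m) (Fin n) ℝ} (hn : 1 ≤ n)
    (hpat : HasPattern S A)
    (hrank : ∀ T : Finset (Fin m), sprank (patternOn S T) ≤ (rowRestrict A T).rank) :
    cospark A = spcospark S := by
  have hbdd : BddAbove {k : ℕ | ∃ B : Matrix (Fin m) (Fin n) ℝ, HasPattern S B ∧ cospark B = k} := by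
    refine ⟨m, fun k hk => ?_⟩
    obtain ⟨B, _, rfl⟩ := hk
    exact cospark_le hn B
  apply le_antisymm
  · exact le_csSup hbdd ⟨A, hpat, rfl⟩
  · refine csSup_le ⟨cospark A, ⟨A, hpat, rfl⟩⟩ ?_
    rintro k ⟨B, hBpat, rfl⟩
    -- show cospark B ≤ cospark A
    obtain ⟨x, hx0, hxl⟩ := cospark_attained hn A
    set T : Finset (Fin m) := Finset.univ.filter (fun i => A.mulVec x i = 0) with hT
    have hker : (rowRestrict A T).mulVec x = 0 := by
      funext i
      rw [rowRestrict_mulVec]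
      by_cases h : i ∈ T
      · rw [if_pos h]
        exact (Finset.mem_filter.mp h).2
      · rw [if_neg h]; rfl
    have hlt : (rowRestrict A T).rank < n :=
      (rank_lt_iff_exists_kernel _).mpr ⟨x, hx0, hker⟩
    have hsprlt : sprank (patternOn S T) < n := lt_of_le_of_lt (hrank T) hlt
    have hBlt : (rowRestrict B T).rank < n :=
      lt_of_le_of_lt (rank_le_sprank (rowRestrict_hasPattern hBpat T)) hsprlt
    obtain ⟨y, hy0, hyk⟩ := (rank_lt_iff_exists_kernel _).mp hBlt
    have hBy : ∀ i ∈ T, B.mulVec y i = 0 := by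
      intro i hi
      have := congrFun hyk i
      rw [rowRestrict_mulVec, if_pos hi] at this
      exact this
    calc cospark B ≤ l0 (B.mulVec y) := cospark_le_l0 hy0
      _ ≤ l0 (A.mulVec x) := by
          apply Finset.card_le_card
          intro i hi
          rw [Finset.mem_filter] at hi ⊢
          refine ⟨Finset.mem_univ _, fun hAx => hi.2 ?_⟩
          exact hBy i (by rw [hT, Finset.mem_filter]; exact ⟨Finset.mem_univ _, hAx⟩)
      _ = cospark A := hxl

end Combinatorial



-- NEW material
/-- the pattern matrix of a configuration -/
noncomputable def patMat (S : Finset (Fin m × Fin n)) (ω : Fin m → Fin n → ℝ) :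
    Matrix (Fin m) (Fin n) ℝ :=
  Matrix.of fun i j => if (i, j) ∈ S then ω i j else 0

lemma measurable_entry (i : Fin m) (j : Fin n) :
    Measurable (fun ω : Fin m → Fin n → ℝ => ω i j) :=
  (measurable_pi_apply j).comp (measurable_pi_apply i)

lemma measurable_det {r : ℕ} {Ω : Type*} [MeasurableSpace Ω]
    (g : Fin r → Fin r → Ω → ℝ) (hg : ∀ a b, Measurable (g a b)) :
    Measurable (fun ω => (Matrix.of fun a b => g a b ω).det) := by
  have : (fun ω => (Matrix.of fun a b => g a b ω).det)
      = fun ω => ∑ σ : Equiv.Perm (Fin r),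
          ((Equiv.Perm.sign σ : ℤ) : ℝ) * ∏ a, g (σ a) a ω := by
    funext ω
    rw [Matrix.det_apply']
    rfl
  rw [this]
  apply Finset.measurable_sum
  intro σ _
  exact (Finset.measurable_prod Finset.univ (fun a _ => hg (σ a) a)).const_mul _

lemma patMat_entry_eq (S : Finset (Fin m × Fin n)) (T : Finset (Fin m)) {r : ℕ}
    (R : Fin r → Fin m) (C : Fin r → Fin n) (ω : Fin m → Fin n → ℝ) (a b : Fin r) :
    (rowRestrict (patMat S ω) T).submatrix R C a b
      = if R a ∈ T then (if (R a, C b) ∈ S then ω (R a) (C b) else 0) else 0 := rfl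

/-- the minor function: measurable -/
lemma measurable_minor (S : Finset (Fin m × Fin n)) (T : Finset (Fin m)) {r : ℕ}
    (R : Fin r → Fin m) (C : Fin r → Fin n) :
    Measurable (fun ω : Fin m → Fin n → ℝ =>
      ((rowRestrict (patMat S ω) T).submatrix R C).det) := by
  have := measurable_det (Ω := Fin m → Fin n → ℝ)
    (fun a b ω => if R a ∈ T then (if (R a, C b) ∈ S then ω (R a) (C b) else 0) else 0)
    (fun a b => by
      by_cases h1 : R a ∈ T
      · by_cases h2 : (R a, C b) ∈ S
        · simp only [if_pos h1, if_pos h2]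
          exact measurable_entry _ _
        · simp only [if_pos h1, if_neg h2]
          exact measurable_const
      · simp only [if_neg h1]
        exact measurable_const)
  exact this

/-- the minor function: sectionwise polynomial -/
lemma secPoly_minor (S : Finset (Fin m × Fin n)) (T : Finset (Fin m)) {r : ℕ}
    (R : Fin r → Fin m) (C : Fin r → Fin n) (p : Fin m × Fin n) (ω : Fin m → Fin n → ℝ) :
    ∃ q : Polynomial ℝ, ∀ t,
      ((rowRestrict (patMat S (upd ω p t)) T).submatrix R C).det = q.eval t := by
  classical
  set N : Matrix (Fin r) (Fin r) (Polynomial ℝ) := Matrix.of fun a b =>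
    if R a ∈ T then
      (if (R a, C b) ∈ S then
        (if (R a, C b) = p then Polynomial.X else Polynomial.C (ω (R a) (C b)))
      else 0)
    else 0 with hN
  refine ⟨N.det, fun t => ?_⟩
  have hmap : (rowRestrict (patMat S (upd ω p t)) T).submatrix R C
      = N.map (Polynomial.eval t) := by
    ext a b
    rw [Matrix.map_apply, hN, patMat_entry_eq]
    by_cases h1 : R a ∈ T
    · by_cases h2 : (R a, C b) ∈ S
      · simp only [Matrix.of_apply, if_pos h1, if_pos h2]
        rw [upd_apply]
        by_cases h3 : (R a, C b) = p
        · rw [if_pos h3, if_pos, Polynomial.eval_X]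
          rw [Prod.ext_iff] at h3
          exact h3
        · rw [if_neg h3, if_neg, Polynomial.eval_C]
          rw [Prod.ext_iff] at h3
          exact h3
      · simp [h1, h2]
    · simp [h1]
  have h2 : N.map (Polynomial.eval t) = N.map (Polynomial.evalRingHom t) := rfl
  rw [hmap, h2, ← RingHom.mapMatrix_apply, ← RingHom.map_det]
  rfl

/-- the minor function: depends only on coordinates in S -/
lemma indep_minor (S : Finset (Fin m × Fin n)) (T : Finset (Fin m)) {r : ℕ}
    (R : Fin r → Fin m) (C : Fin r → Fin n) {p : Fin m × Fin n} (hp : p ∉ S)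
    (ω : Fin m → Fin n → ℝ) (t : ℝ) :
    ((rowRestrict (patMat S (upd ω p t)) T).submatrix R C).det
      = ((rowRestrict (patMat S ω) T).submatrix R C).det := by
  congr 1
  ext a b
  rw [patMat_entry_eq, patMat_entry_eq]
  by_cases h1 : R a ∈ T
  · by_cases h2 : (R a, C b) ∈ S
    · simp only [if_pos h1, if_pos h2]
      have : (R a, C b) ≠ p := fun h => hp (h ▸ h2)
      exact upd_eval_ne ω this t
    · simp [h1, h2]
  · simp [h1]



/-- if `sprank S = n` and the entries indexed by `S` are drawn independently
from atomless Borel probability distributions on ℝ (entries outside `S` set to zero), then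
with probability one the cospark equals the generic cospark. -/
theorem stmt4 {m n : ℕ} (hn : 1 ≤ n) (hmn : n < m) (S : Finset (Fin m × Fin n))
    (hspr : sprank S = n)
    (μ : Fin m → Fin n → Measure ℝ) [∀ i j, IsProbabilityMeasure (μ i j)]
    (hatoms : ∀ i j, (i, j) ∈ S → ∀ x : ℝ, μ i j {x} = 0) :
    (Measure.pi fun i => Measure.pi fun j => μ i j)
      {ω : Fin m → Fin n → ℝ |
        cospark (Matrix.of fun i j => if (i, j) ∈ S then ω i j else 0) = spcospark S} = 1 := by
  classical
  set ν := (Measure.pi fun i => Measure.pi fun j => μ i j) with hν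
  have hat : ∀ p ∈ S, ∀ c : ℝ, μ p.1 p.2 {c} = 0 := fun p hp c => hatoms p.1 p.2 hp c
  -- choose witnesses for each T
  have hwT : ∀ T : Finset (Fin m), ∃ A : Matrix (Fin m) (Fin n) ℝ,
      HasPattern (patternOn S T) A ∧ A.rank = sprank (patternOn S T) :=
    fun T => sprank_attained _
  choose Aw hAwpat hAwrank using hwT
  have hmin : ∀ T : Finset (Fin m), ∃ (R : Fin (sprank (patternOn S T)) → Fin m)
      (C : Fin (sprank (patternOn S T)) → Fin n), ((Aw T).submatrix R C).det ≠ 0 :=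
    fun T => exists_nonzero_minor _ (hAwrank T)
  choose Rm Cm hRC using hmin
  set F : Finset (Fin m) → (Fin m → Fin n → ℝ) → ℝ :=
    fun T ω => ((rowRestrict (patMat S ω) T).submatrix (Rm T) (Cm T)).det with hF
  -- null events
  have h1 : ∀ p ∈ S, ν {ω : Fin m → Fin n → ℝ | ω p.1 p.2 = 0} = 0 := by
    intro p hp
    have := core μ S hat Unit inferInstance (fun _ ω => ω p.1 p.2)
      (fun _ => measurable_entry _ _) ?_ ?_ ?_
    · rw [← this]
      congr 1
      ext ω
      simp
    · intro _ p' ω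
      by_cases h : p = p'
      · subst h
        refine ⟨Polynomial.X, fun t => ?_⟩
        show upd ω p t p.1 p.2 = _
        rw [upd_apply, if_pos ⟨rfl, rfl⟩, Polynomial.eval_X]
      · refine ⟨Polynomial.C (ω p.1 p.2), fun t => ?_⟩
        show upd ω p' t p.1 p.2 = _
        rw [upd_eval_ne ω h, Polynomial.eval_C]
    · intro _ p' hp' ω t
      have hne : p ≠ p' := fun h => hp' (h ▸ hp)
      show upd ω p' t p.1 p.2 = ω p.1 p.2
      exact upd_eval_ne ω hne t
    · exact ⟨(), (fun _ _ => 1), one_ne_zero⟩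
  have h2 : ∀ T : Finset (Fin m), ν {ω : Fin m → Fin n → ℝ | F T ω = 0} = 0 := by
    intro T
    have := core μ S hat Unit inferInstance (fun _ ω => F T ω)
      (fun _ => measurable_minor S T (Rm T) (Cm T)) ?_ ?_ ?_
    · rw [← this]
      congr 1
      ext ω
      simp
    · intro _ p ω
      exact secPoly_minor S T (Rm T) (Cm T) p ω
    · intro _ p hp ω t
      exact indep_minor S T (Rm T) (Cm T) hp ω t
    · -- witness: ω₀ from Aw T
      refine ⟨(), (fun i j => Aw T i j), ?_⟩
      have hrew : rowRestrict (patMat S (fun i j => Aw T i j)) T = Aw T := by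
        ext i j
        show (if i ∈ T then (if (i, j) ∈ S then Aw T i j else 0) else 0) = Aw T i j
        by_cases h1 : i ∈ T
        · by_cases h2 : (i, j) ∈ S
          · simp [h1, h2]
          · simp only [if_pos h1, if_neg h2]
            by_contra hne
            have := (hAwpat T i j).mp (Ne.symm hne)
            rw [patternOn, Finset.mem_filter] at this
            exact h2 this.1
        · simp only [if_neg h1]
          by_contra hne
          have := (hAwpat T i j).mp (Ne.symm hne)
          rw [patternOn, Finset.mem_filter] at this
          exact h1 this.2
      show F T (fun i j => Aw T i j) ≠ 0
      rw [hF]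
      simp only
      rw [hrew]
      exact hRC T
  -- the bad set
  set Bad : Set (Fin m → Fin n → ℝ) :=
    (⋃ p ∈ S, {ω : Fin m → Fin n → ℝ | ω p.1 p.2 = 0})
      ∪ ⋃ T : Finset (Fin m), {ω : Fin m → Fin n → ℝ | F T ω = 0} with hBad
  have hBadMeas : MeasurableSet Bad := by
    apply MeasurableSet.union
    · exact MeasurableSet.biUnion S.countable_toSet
        (fun p _ => (measurable_entry p.1 p.2) (measurableSet_singleton 0))
    · exact MeasurableSet.iUnion
        (fun T => (measurable_minor S T (Rm T) (Cm T)) (measurableSet_singleton 0))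
  have hBadNull : ν Bad = 0 := by
    rw [hBad]
    apply measure_union_null
    · exact (measure_biUnion_null_iff S.countable_toSet).mpr (fun p hp => h1 p hp)
    · exact measure_iUnion_null h2
  -- good implies the conclusion
  have hgood : Badᶜ ⊆ {ω : Fin m → Fin n → ℝ |
      cospark (Matrix.of fun i j => if (i, j) ∈ S then ω i j else 0) = spcospark S} := by
    intro ω hω
    rw [hBad, Set.compl_union, Set.mem_inter_iff] at hω
    obtain ⟨hω1, hω2⟩ := hω
    have hco : ∀ p ∈ S, ω p.1 p.2 ≠ 0 := by
      intro p hp h0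
      exact hω1 (Set.mem_biUnion hp h0)
    have hFne : ∀ T : Finset (Fin m), F T ω ≠ 0 := by
      intro T h0
      exact hω2 (Set.mem_iUnion.mpr ⟨T, h0⟩)
    have hpat : HasPattern S (patMat S ω) := by
      intro i j
      show (if (i, j) ∈ S then ω i j else 0) ≠ 0 ↔ (i, j) ∈ S
      by_cases h : (i, j) ∈ S
      · simp only [if_pos h]
        exact iff_of_true (hco (i, j) h) h
      · simp [h]
    have hrank : ∀ T : Finset (Fin m),
        sprank (patternOn S T) ≤ (rowRestrict (patMat S ω) T).rank := by
      intro T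
      exact rank_ge_of_minor _ (Rm T) (Cm T) (hFne T)
    exact cospark_eq_spcospark_of_generic hn hpat hrank
  -- conclude
  have hcompl : ν Badᶜ = 1 := by
    rw [measure_compl hBadMeas (measure_ne_top _ _), hBadNull]
    simp
  refine le_antisymm prob_le_one ?_
  calc (1:ENNReal) = ν Badᶜ := hcompl.symm
    _ ≤ _ := measure_mono hgood
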